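/- Let q be a prime power, σ : x ↦ x^{q^s} an automorphism of F_{q^m} with gcd(s,m)=1, and let h, n, m be positive integers with h ≤ n ≤ m. Let 𝒞 be a set of σ-linearized polynomials over F_{q^m} that contains (𝒢_{m,h,σ})^{σ^j} = { Σ_{i=j}^{j+h−1} a_i x^{σ^i} : a_i ∈ F_{q^m} } for some integer j with 0 ≤ j ≤ m−h. Let α_1,…,α_n be F_q-linearly independent elements of F_{q^m}, let C = {(g(α_1),…,g(α_n)) : g ∈ 𝒞} ⊆ F_{q^m}^n, and let d be the minimum rank distance of C. Let τ be an integer with ⌊(d−1)/2⌋ + 1 ≤ τ ≤ d−1, τ ≤ n−h, and j < τ. Then there exists a word w ∈ F_{q^m}^n ∖ C such that |C ∩ B_τ(w)| ≥ [n choose n−τ]_q / q^{m(n−τ−h)}, where [n choose n−τ]_q = ∏_{i=0}^{n−τ−1} (q^{n−i}−1)/(q^{n−τ−i}−1) is the number of (n−τ)-dimensional F_q-subspaces of an n-dimensional F_q-vector space. -/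

import Mathlib

/-- Rank weight of a vector `v ∈ K^n` over `F_q`. -/
noncomputable def rkw (Fq : Type) [Field Fq] {K : Type} [Field K] [Algebra Fq K] {n : ℕ}
    (v : Fin n → K) : ℕ :=
  Module.finrank Fq ↥(Submodule.span Fq (Set.range v))

/-- Ball of radius `t` around `w` in the rank metric. -/
def ball (Fq : Type) [Field Fq] {K : Type} [Field K] [Algebra Fq K] {n : ℕ}
    (w : Fin n → K) (t : ℕ) : Set (Fin n → K) :=
  {c : Fin n → K | rkw Fq (w - c) ≤ t}

/-- Minimum rank distance of a code `C ⊆ K^n`. -/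
noncomputable def minDist (Fq : Type) [Field Fq] {K : Type} [Field K] [Algebra Fq K] {n : ℕ}
    (C : Set (Fin n → K)) : ℕ :=
  sInf {r : ℕ | ∃ u ∈ C, ∃ v ∈ C, u ≠ v ∧ rkw Fq (u - v) = r}

open Function

/-- Euclidean descent for Frobenius fixed points. -/
lemma fixgcd {K : Type} [Monoid K] (q : ℕ) :
    ∀ s m : ℕ, ∀ z : K, z ^ q ^ s = z → z ^ q ^ m = z → z ^ q ^ Nat.gcd s m = z := by
  intro s
  induction s using Nat.strong_induction_on with
  | _ s IH =>
    intro m z hzs hzm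
    rcases Nat.eq_zero_or_pos s with hs0 | hs0
    · subst hs0; simpa using hzm
    · have hmul : ∀ k : ℕ, z ^ q ^ (s * k) = z := by
        intro k
        induction k with
        | zero => simpa using rfl
        | succ k ih =>
          have : q ^ (s * (k+1)) = q ^ (s*k) * q ^ s := by rw [← pow_add]; ring_nf
          rw [this, pow_mul, ih, hzs]
      have hmod : z ^ q ^ (m % s) = z := by
        conv_rhs => rw [← hzm]
        have hm : m = s * (m / s) + m % s := (Nat.div_add_mod m s).symm
        conv_rhs => rw [hm]
        rw [pow_add, pow_mul, hmul]
      have := IH (m % s) (Nat.mod_lt m hs0) s z hmod hzs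
      rwa [Nat.gcd_rec]

section Lin

variable {Fq K : Type} [Field Fq] [Field K] [Algebra Fq K] (q s : ℕ)
variable (hpadd : ∀ (t : ℕ) (x y : K), (x+y) ^ q ^ t = x ^ q ^ t + y ^ q ^ t)
variable (hpsmul : ∀ (t : ℕ) (c : Fq) (x : K), (c • x) ^ q ^ t = c • x ^ q ^ t)

/-- the `Fq`-linear monomial map `x ↦ b * x ^ (q ^ t)`. -/
def monLin (b : K) (t : ℕ) : K →ₗ[Fq] K where
  toFun x := b * x ^ q ^ t
  map_add' x y := by show b * (x+y) ^ q ^ t = b * x ^ q ^ t + b * y ^ q ^ t; rw [hpadd, mul_add]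
  map_smul' c x := by
    show b * (c • x) ^ q ^ t = c • (b * x ^ q ^ t)
    rw [hpsmul, mul_smul_comm]

@[simp] lemma monLin_apply (b : K) (t : ℕ) (x : K) :
    monLin q hpadd hpsmul b t x = b * x ^ q ^ t := rfl

end Lin
section Annih

variable {Fq K : Type} [Field Fq] [Field K] [Algebra Fq K] (q s : ℕ)
variable (hpadd : ∀ (t : ℕ) (x y : K), (x+y) ^ q ^ t = x ^ q ^ t + y ^ q ^ t)
variable (hpsmul : ∀ (t : ℕ) (c : Fq) (x : K), (c • x) ^ q ^ t = c • x ^ q ^ t)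
/-- Existence of an annihilator linearized polynomial with prescribed kernel. -/
lemma annih (hq0 : q ≠ 0)
    (hfix : ∀ z : K, z ^ q ^ s = z → ∃ c : Fq, z = algebraMap Fq K c) : ∀ (k : ℕ) (β : Fin k → K), LinearIndependent Fq β →
    ∃ b : Fin (k+1) → K, b (Fin.last k) = 1 ∧
      LinearMap.ker (∑ i : Fin (k+1), monLin q hpadd hpsmul (b i) (s * (i : ℕ)))
        = Submodule.span Fq (Set.range β) := by
  intro k
  induction k with
  | zero =>
    intro β _
    refine ⟨fun _ => 1, rfl, ?_⟩
    have h1 : Set.range β = ∅ := by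
      rw [Set.range_eq_empty_iff]; exact ⟨fun i => absurd i.2 (by omega)⟩
    rw [h1, Submodule.span_empty]
    rw [LinearMap.ker_eq_bot]
    have hid : ∀ x : K,
        (∑ i : Fin 1, monLin q hpadd hpsmul ((fun _ => (1:K)) i) (s * (i:ℕ))) x = x := by
      intro x; rw [LinearMap.sum_apply, Fin.sum_univ_one]; simp
    intro x y hxy
    rwa [hid, hid] at hxy
  | succ k IH =>
    intro β hβ
    obtain ⟨b', hb'last, hker'⟩ := IH (β ∘ Fin.castSucc)
      (hβ.comp Fin.castSucc (Fin.castSucc_injective _))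
    set P : K →ₗ[Fq] K :=
      ∑ i : Fin (k+1), monLin q hpadd hpsmul (b' i) (s * (i : ℕ)) with hP
    have hPapp : ∀ x : K, P x = ∑ i : Fin (k+1), b' i * x ^ q ^ (s * (i:ℕ)) := by
      intro x; rw [hP, LinearMap.sum_apply]; rfl
    set v : K := β (Fin.last k) with hv
    have hvnot : v ∉ Submodule.span Fq (Set.range (β ∘ Fin.castSucc)) := by
      have h1 : v ∉ Submodule.span Fq (β '' Set.range (Fin.castSucc (n := k))) := by
        apply hβ.notMem_span_image
        rintro ⟨i, hi⟩
        exact absurd hi (Fin.ne_of_lt (Fin.castSucc_lt_last i))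
      rwa [← Set.range_comp] at h1
    have hu : P v ≠ 0 := by
      intro h0
      exact hvnot (hker' ▸ LinearMap.mem_ker.mpr h0)
    set u : K := P v with huu
    set c : K := u ^ q ^ s / u with hc
    set bs : Fin (k+2) → K :=
      (Fin.snoc (fun i : Fin (k+1) => -c * b' i) (0:K) : Fin (k+2) → K) with hbs
    set bc : Fin (k+2) → K :=
      (Fin.cons (0:K) (fun i : Fin (k+1) => (b' i) ^ q ^ s) : Fin (k+2) → K) with hbc
    set b : Fin (k+2) → K := fun i => bs i + bc i with hb
    have hblast : b (Fin.last (k+1)) = 1 := by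
      rw [hb]
      show bs (Fin.last (k+1)) + bc (Fin.last (k+1)) = 1
      rw [hbs, hbc]
      rw [Fin.snoc_last, ← Fin.succ_last, Fin.cons_succ, hb'last, one_pow, zero_add]
    refine ⟨b, hblast, ?_⟩
    set Q : K →ₗ[Fq] K :=
      ∑ i : Fin (k+2), monLin q hpadd hpsmul (b i) (s * (i : ℕ)) with hQ
    have hQapp : ∀ x : K, Q x = (P x) ^ q ^ s - c * P x := by
      intro x
      have e1 : Q x = ∑ i : Fin (k+2), b i * x ^ q ^ (s * (i:ℕ)) := by
        rw [hQ, LinearMap.sum_apply]; rfl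
      rw [e1]
      have e2 : ∀ i : Fin (k+2), b i * x ^ q ^ (s * (i:ℕ))
          = bs i * x ^ q ^ (s * (i:ℕ)) + bc i * x ^ q ^ (s * (i:ℕ)) := by
        intro i; rw [hb]; ring
      rw [Finset.sum_congr rfl (fun i _ => e2 i), Finset.sum_add_distrib]
      have e3 : ∑ i : Fin (k+2), bs i * x ^ q ^ (s * (i:ℕ))
          = -(c * P x) := by
        rw [Fin.sum_univ_castSucc]
        simp only [hbs, Fin.snoc_castSucc, Fin.snoc_last, Fin.coe_castSucc, zero_mul, add_zero]
        rw [hPapp, Finset.mul_sum, ← Finset.sum_neg_distrib]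
        exact Finset.sum_congr rfl (fun i _ => by ring)
      have e4 : ∑ i : Fin (k+2), bc i * x ^ q ^ (s * (i:ℕ))
          = (P x) ^ q ^ s := by
        rw [Fin.sum_univ_succ]
        simp only [hbc, Fin.cons_zero, Fin.cons_succ, Fin.val_succ, zero_mul, zero_add]
        have hmap : (P x) ^ q ^ s
            = ∑ i : Fin (k+1), (b' i * x ^ q ^ (s * (i:ℕ))) ^ q ^ s := by
          rw [hPapp]
          exact map_sum (AddMonoidHom.mk' (fun z : K => z ^ q ^ s) (fun a b => hpadd s a b)) _ _
        rw [hmap]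
        refine Finset.sum_congr rfl (fun i _ => ?_)
        rw [mul_pow, ← pow_mul, ← pow_add]
        congr 2
      rw [e3, e4]; ring
    have hQker : LinearMap.ker Q = Submodule.span Fq (Set.range β) := by
      apply le_antisymm
      · -- ker Q ≤ span
        intro x hx
        rw [LinearMap.mem_ker] at hx
        rw [hQapp] at hx
        by_cases hPx : P x = 0
        · have hx' : x ∈ Submodule.span Fq (Set.range (β ∘ Fin.castSucc)) :=
            hker' ▸ LinearMap.mem_ker.mpr hPx
          exact Submodule.span_mono (Set.range_comp_subset_range _ _) hx'
        · have hz : (P x / u) ^ q ^ s = P x / u := by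
            rw [div_pow]
            have hx2 : (P x) ^ q ^ s = c * P x := by linear_combination hx
            rw [hx2, hc]
            field_simp
          obtain ⟨c', hc'⟩ := hfix _ hz
          have hPxc : P x = c' • u := by
            rw [Algebra.smul_def, ← hc']
            field_simp
          have h5 : P (x - c' • v) = 0 := by
            rw [map_sub, map_smul, hPxc, ← huu]; simp
          have h6 : x - c' • v ∈ Submodule.span Fq (Set.range (β ∘ Fin.castSucc)) :=
            hker' ▸ LinearMap.mem_ker.mpr h5
          have h7 : x - c' • v ∈ Submodule.span Fq (Set.range β) :=
            Submodule.span_mono (Set.range_comp_subset_range _ _) h6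
          have h8 : c' • v ∈ Submodule.span Fq (Set.range β) :=
            Submodule.smul_mem _ _ (Submodule.subset_span ⟨Fin.last k, rfl⟩)
          have := Submodule.add_mem _ h7 h8
          simpa using this
      · rw [Submodule.span_le]
        rintro _ ⟨i, rfl⟩
        have : Q (β i) = 0 := by
          rw [hQapp]
          induction i using Fin.lastCases with
          | last =>
            rw [← hv, ← huu, hc, div_mul_cancel₀ _ hu, sub_self]
          | cast i' =>
            have hmem : β (Fin.castSucc i') ∈ Submodule.span Fq (Set.range (β ∘ Fin.castSucc)) :=
              Submodule.subset_span ⟨i', rfl⟩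
            rw [← hker'] at hmem
            have hPβ : P (β (Fin.castSucc i')) = 0 := LinearMap.mem_ker.mp hmem
            rw [hPβ, zero_pow (pow_ne_zero s hq0), mul_zero, sub_zero]
        exact LinearMap.mem_ker.mpr this
    exact hQker
end Annih
/-- Pigeonhole: some fiber is large. -/
lemma pigeonFiber {A B : Type} [Finite A] [Finite B] [Nonempty B] (f : A → B) :
    ∃ y : B, Nat.card A ≤ Nat.card {a : A // f a = y} * Nat.card B := by
  classical
  cases nonempty_fintype A
  cases nonempty_fintype B
  obtain ⟨y, -, hy⟩ := Finset.exists_max_image Finset.univ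
    (fun y => (Finset.univ.filter fun a => f a = y).card)
    ⟨Classical.arbitrary B, Finset.mem_univ _⟩
  refine ⟨y, ?_⟩
  have h1 : Fintype.card A = ∑ y : B, (Finset.univ.filter fun a => f a = y).card := by
    rw [← Finset.card_univ]
    exact Finset.card_eq_sum_card_fiberwise (fun x _ => Finset.mem_univ (f x))
  have h2 : ∑ y' : B, (Finset.univ.filter fun a => f a = y').card
      ≤ Fintype.card B * (Finset.univ.filter fun a => f a = y).card := by
    rw [← smul_eq_mul, ← Finset.card_univ]
    exact Finset.sum_le_card_nsmul Finset.univ _ _ (fun y' _ => hy y' (Finset.mem_univ _))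
  have h3 : Nat.card {a : A // f a = y} = (Finset.univ.filter fun a => f a = y).card := by
    rw [Nat.card_eq_fintype_card, Fintype.card_subtype]
  rw [Nat.card_eq_fintype_card (α := A), h3, mul_comm,
    Nat.card_eq_fintype_card (α := B), h1]
  exact h2
open Polynomial in
/-- Solutions of `z ^ q = z` in `K` lie in the image of `Fq`. -/
lemma fixfield {Fq K : Type} [Field Fq] [Fintype Fq] [Field K] [Fintype K] [Algebra Fq K]
    (q : ℕ) (hcard : Fintype.card Fq = q) (z : K) (hz : z ^ q = z) :
    ∃ c : Fq, z = algebraMap Fq K c := by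
  classical
  have hq2 : 2 ≤ q := by rw [← hcard]; exact Fintype.one_lt_card
  have hdeg : (X ^ q - X : Polynomial K).natDegree = q := by
    rw [natDegree_sub_eq_left_of_natDegree_lt, natDegree_X_pow]
    rw [natDegree_X_pow, natDegree_X]; omega
  set t : Finset K := Finset.univ.filter (fun w : K => w ^ q = w) with ht
  set img : Finset K := Finset.univ.image (algebraMap Fq K) with himg
  have hsub : img ⊆ t := by
    intro x hx
    simp only [himg, Finset.mem_image] at hx
    obtain ⟨c, -, rfl⟩ := hx
    simp only [ht, Finset.mem_filter, Finset.mem_univ, true_and]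
    rw [← map_pow]
    congr 1
    rw [← hcard]; exact FiniteField.pow_card c
  have htcard : t.card ≤ q := by
    have hne : (X ^ q - X : Polynomial K) ≠ 0 := by
      intro h0
      rw [h0, natDegree_zero] at hdeg; omega
    have hsub2 : t ⊆ (X ^ q - X : Polynomial K).roots.toFinset := by
      intro x hx
      simp only [ht, Finset.mem_filter, Finset.mem_univ, true_and] at hx
      rw [Multiset.mem_toFinset, mem_roots hne]
      simp [IsRoot, sub_eq_zero, hx]
    calc t.card ≤ (X ^ q - X : Polynomial K).roots.toFinset.card := Finset.card_le_card hsub2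
      _ ≤ Multiset.card (X ^ q - X : Polynomial K).roots := Multiset.toFinset_card_le _
      _ ≤ (X ^ q - X : Polynomial K).natDegree := Polynomial.card_roots' _
      _ = q := hdeg
  have himgcard : img.card = q := by
    rw [himg, Finset.card_image_of_injective _ (algebraMap Fq K).injective,
      Finset.card_univ, hcard]
  have heq : img = t := Finset.eq_of_subset_of_card_le hsub (by rw [himgcard]; exact htcard)
  have hzt : z ∈ t := by simp only [ht, Finset.mem_filter, Finset.mem_univ, true_and]; exact hz
  rw [← heq, himg, Finset.mem_image] at hzt
  obtain ⟨c, -, hc⟩ := hzt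
  exact ⟨c, hc.symm⟩
set_option maxHeartbeats 1000000 in
/-- Johnson-like bound for codes containing a Frobenius twist
`(𝒢_{m,h,σ})^{σ^j}` of a generalized Gabidulin code: for a suitable radius `τ` there is a
word `w ∉ C` with `|C ∩ B_τ(w)| ≥ [n choose n−τ]_q / q^{m(n−τ−h)}`, where the Gaussian
binomial is the number of `(n−τ)`-dimensional `F_q`-subspaces of an `n`-dimensional
`F_q`-space. -/
theorem stmt_9 (q s h n m j τ : ℕ) (Fq K : Type) [Field Fq] [Fintype Fq] [Field K]
    [Fintype K] [Algebra Fq K]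
    (hcard : Fintype.card Fq = q) (hfin : Module.finrank Fq K = m)
    (hs : Nat.gcd s m = 1) (hh : 0 < h) (hhn : h ≤ n) (hnm : n ≤ m)
    (𝒞 : Set (K → K))
    (hlin : ∀ f ∈ 𝒞, ∃ N : ℕ, ∃ a : Fin N → K, ∀ x : K,
      f x = ∑ i : Fin N, a i * x ^ ((q ^ s) ^ (i : ℕ)))
    (hjm : j ≤ m - h)
    (hGab : {f : K → K | ∃ a : Fin h → K, ∀ x : K,
        f x = ∑ i : Fin h, a i * x ^ ((q ^ s) ^ (j + (i : ℕ)))} ⊆ 𝒞)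
    (α : Fin n → K) (hα : LinearIndependent Fq α)
    (C : Set (Fin n → K)) (hC : C = (fun g : K → K => fun i : Fin n => g (α i)) '' 𝒞)
    (d : ℕ) (hd : d = minDist Fq C)
    (hτ1 : (d - 1) / 2 + 1 ≤ τ) (hτ2 : (τ : ℤ) ≤ (d : ℤ) - 1)
    (hτ3 : τ ≤ n - h) (hjτ : j < τ) :
    ∃ w : Fin n → K, w ∉ C ∧
      Nat.card {U : Submodule Fq (Fin n → Fq) // Module.finrank Fq ↥U = n - τ}
        ≤ Nat.card ↥(C ∩ ball Fq w τ) * q ^ (m * (n - τ - h)) := by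
  classical
  -- numeric facts
  have hq2 : 2 ≤ q := by rw [← hcard]; exact Fintype.one_lt_card
  have hq0 : q ≠ 0 := by omega
  have hτpos : 1 ≤ τ := by omega
  have hhτn : h + τ ≤ n := by omega
  have hκ : n - τ = h + (n - τ - h) := by omega
  -- characteristic facts
  obtain ⟨e, hp, hqe⟩ := FiniteField.card Fq (ringChar Fq)
  have hqpe : q = ringChar Fq ^ (e : ℕ) := by rw [← hcard]; exact hqe
  haveI factp : Fact (ringChar Fq).Prime := ⟨hp⟩
  haveI : CharP K (ringChar Fq) :=
    charP_of_injective_algebraMap (algebraMap Fq K).injective _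
  have hpadd : ∀ (t : ℕ) (x y : K), (x + y) ^ q ^ t = x ^ q ^ t + y ^ q ^ t := by
    intro t x y
    rw [hqpe, ← pow_mul]
    exact add_pow_char_pow x y _ _
  have hFqpow : ∀ (t : ℕ) (c : Fq), c ^ q ^ t = c := by
    intro t
    induction t with
    | zero => intro c; simp
    | succ t ih =>
      intro c
      rw [pow_succ, pow_mul, ih, ← hcard, FiniteField.pow_card]
  have hpsmul : ∀ (t : ℕ) (c : Fq) (x : K), (c • x) ^ q ^ t = c • x ^ q ^ t := by
    intro t c x
    rw [Algebra.smul_def, Algebra.smul_def, mul_pow, ← map_pow, hFqpow]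
  have hKcard : Fintype.card K = q ^ m := by
    rw [← hfin, ← hcard]; exact Module.card_eq_pow_finrank
  have hfix : ∀ z : K, z ^ q ^ s = z → ∃ c : Fq, z = algebraMap Fq K c := by
    intro z hzs
    have hzm : z ^ q ^ m = z := by rw [← hKcard]; exact FiniteField.pow_card z
    have hgc := fixgcd q s m z hzs hzm
    rw [hs, pow_one] at hgc
    exact fixfield q hcard z hgc
  haveI : Module.Finite Fq K := Module.finite_iff_finite.mpr inferInstance
  -- the linear embedding of Fq^n into K via α
  set e' : (Fin n → Fq) →ₗ[Fq] K := ∑ i : Fin n, (LinearMap.proj i).smulRight (α i) with he'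
  have he'apply : ∀ cc : Fin n → Fq, e' cc = ∑ i : Fin n, cc i • α i := by
    intro cc
    rw [he', LinearMap.sum_apply]
    exact Finset.sum_congr rfl fun i _ => rfl
  have he'inj : Function.Injective e' := by
    rw [← LinearMap.ker_eq_bot, eq_bot_iff]
    intro cc hcc
    rw [LinearMap.mem_ker, he'apply] at hcc
    have := Fintype.linearIndependent_iff.mp hα cc hcc
    rw [Submodule.mem_bot]
    exact funext this
  set W : Submodule Fq K := Submodule.span Fq (Set.range α) with hW
  have hrange : LinearMap.range e' = W := by
    apply le_antisymm
    · rintro x ⟨cc, rfl⟩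
      rw [he'apply]
      exact Submodule.sum_mem _ fun i _ =>
        Submodule.smul_mem _ _ (Submodule.subset_span ⟨i, rfl⟩)
    · rw [hW, Submodule.span_le]
      rintro _ ⟨i, rfl⟩
      refine ⟨Pi.single i 1, ?_⟩
      rw [he'apply, Finset.sum_eq_single i]
      · simp
      · intro l _ hl; rw [Pi.single_eq_of_ne hl, zero_smul]
      · intro hi; exact absurd (Finset.mem_univ i) hi
  have hWfin : Module.finrank Fq ↥W = n := by
    rw [hW, finrank_span_eq_card hα, Fintype.card_fin]
  haveI : Finite (Submodule Fq (Fin n → Fq)) :=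
    Finite.of_injective (fun U => (U : Set (Fin n → Fq))) SetLike.coe_injective
  -- the subspace data
  set STy : Type := {U : Submodule Fq (Fin n → Fq) // Module.finrank Fq ↥U = n - τ}
    with hSTy
  set V : STy → Submodule Fq K := fun U => Submodule.map e' U.1 with hV
  have hVfin : ∀ U, Module.finrank Fq ↥(V U) = h + (n - τ - h) := by
    intro U
    rw [hV]
    rw [← (Submodule.equivMapOfInjective e' he'inj U.1).finrank_eq, U.2]
    omega
  have hVle : ∀ U, V U ≤ W := by
    intro U x hx
    rw [hV] at hx
    obtain ⟨c0, -, rfl⟩ := hx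
    rw [← hrange]
    exact ⟨c0, rfl⟩
  set bas : ∀ U : STy, Module.Basis (Fin (h + (n - τ - h))) Fq ↥(V U) :=
    fun U => Module.finBasisOfFinrankEq Fq ↥(V U) (hVfin U) with hbas
  set βv : STy → Fin (h + (n - τ - h)) → K := fun U i => ((bas U) i : K) with hβv
  have hβvli : ∀ U, LinearIndependent Fq (βv U) := fun U =>
    (bas U).linearIndependent.map' (V U).subtype (Submodule.ker_subtype _)
  have hβvspan : ∀ U, Submodule.span Fq (Set.range (βv U)) = V U := by
    intro U
    have h1 : Set.range (βv U) = (V U).subtype '' Set.range (bas U) := by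
      rw [← Set.range_comp]; rfl
    rw [h1, Submodule.span_image, Module.Basis.span_eq, Submodule.map_top, Submodule.range_subtype]
  -- the Frobenius twist
  set Fj : K →ₗ[Fq] K := monLin q hpadd hpsmul 1 (s * j) with hFj
  have hFjapply : ∀ x : K, Fj x = x ^ q ^ (s * j) := by
    intro x; rw [hFj, monLin_apply, one_mul]
  have hFjinj : Function.Injective Fj := by
    intro x y hxy
    rw [← sub_eq_zero, ← map_sub, hFjapply] at hxy
    rw [← sub_eq_zero]
    exact pow_eq_zero_iff (pow_ne_zero _ hq0) |>.mp hxy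
  set β : STy → Fin (h + (n - τ - h)) → K := fun U i => Fj (βv U i) with hβ
  have hβli : ∀ U, LinearIndependent Fq (β U) := fun U =>
    (hβvli U).map' Fj (LinearMap.ker_eq_bot.mpr hFjinj)
  have hβspan : ∀ U, Submodule.span Fq (Set.range (β U)) = Submodule.map Fj (V U) := by
    intro U
    have h1 : Set.range (β U) = Fj '' Set.range (βv U) := by
      rw [← Set.range_comp]; rfl
    rw [h1, Submodule.span_image, hβvspan U]
  -- annihilator polynomials
  have hann := fun U : STy =>
    annih q s hpadd hpsmul hq0 hfix (h + (n - τ - h)) (β U) (hβli U)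
  choose bb hbtop hbker using hann
  set Alin : STy → (K →ₗ[Fq] K) := fun U =>
    (∑ i : Fin (h + (n - τ - h) + 1), monLin q hpadd hpsmul (bb U i) (s * (i : ℕ))).comp Fj
    with hAlin
  have hAapply : ∀ U (x : K),
      Alin U x = ∑ i : Fin (h + (n - τ - h) + 1), bb U i * x ^ q ^ (s * (j + (i : ℕ))) := by
    intro U x
    rw [hAlin]
    show (∑ i : Fin (h + (n - τ - h) + 1),
      monLin q hpadd hpsmul (bb U i) (s * (i : ℕ))) (Fj x) = _
    rw [LinearMap.sum_apply]
    refine Finset.sum_congr rfl fun i _ => ?_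
    rw [monLin_apply, hFjapply, ← pow_mul, ← pow_add]
    congr 2
    ring
  have hAker : ∀ U, LinearMap.ker (Alin U) = V U := by
    intro U
    ext x
    rw [LinearMap.mem_ker]
    constructor
    · intro hx
      have h1 : Fj x ∈ LinearMap.ker (∑ i : Fin (h + (n - τ - h) + 1),
          monLin q hpadd hpsmul (bb U i) (s * (i : ℕ))) := by
        rw [LinearMap.mem_ker]
        rw [hAlin] at hx
        exact hx
      rw [hbker U, hβspan U] at h1
      obtain ⟨x', hx', hxx'⟩ := h1
      exact (hFjinj hxx') ▸ hx'
    · intro hx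
      have h1 : Fj x ∈ Submodule.map Fj (V U) := Submodule.mem_map_of_mem hx
      rw [← hβspan U, ← hbker U] at h1
      rw [hAlin]
      exact LinearMap.mem_ker.mp h1
  -- pigeonhole over high coefficients
  set Φ : STy → (Fin (n - τ - h) → K) := fun U l =>
    bb U (Fin.castSucc (Fin.natAdd h l)) with hΦ
  obtain ⟨y, hy⟩ := pigeonFiber Φ
  have cardB : Nat.card (Fin (n - τ - h) → K) = q ^ (m * (n - τ - h)) := by
    rw [Nat.card_eq_fintype_card, Fintype.card_fun, hKcard, Fintype.card_fin, ← pow_mul]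
  -- the received word
  set w : Fin n → K := fun i0 =>
    (α i0) ^ q ^ (s * (j + (h + (n - τ - h)))) +
      ∑ l : Fin (n - τ - h), y l * (α i0) ^ q ^ (s * (j + (h + (l : ℕ)))) with hw
  -- candidate codewords
  set aa : STy → Fin h → K := fun U i =>
    -(bb U (Fin.castSucc (Fin.castAdd (n - τ - h) i))) with haa
  set gg : STy → K → K := fun U x =>
    ∑ i : Fin h, aa U i * x ^ ((q ^ s) ^ (j + (i : ℕ))) with hgg
  set cc : STy → Fin n → K := fun U i0 => gg U (α i0) with hcc
  have hccC : ∀ U, cc U ∈ C := by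
    intro U
    rw [hC, hcc]
    exact ⟨gg U, hGab ⟨aa U, fun x => by rw [hgg]⟩, rfl⟩
  -- the key identity
  have key : ∀ U, Φ U = y → ∀ x : K,
      (x ^ q ^ (s * (j + (h + (n - τ - h)))) +
        ∑ l : Fin (n - τ - h), y l * x ^ q ^ (s * (j + (h + (l : ℕ))))) - gg U x
      = Alin U x := by
    intro U hU x
    have hyy : ∀ l : Fin (n - τ - h),
        bb U (Fin.castSucc (Fin.natAdd h l)) = y l := by
      intro l
      rw [← hU, hΦ]
    rw [hAapply, Fin.sum_univ_castSucc, Fin.sum_univ_add, hbtop U]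
    simp only [hgg, haa, Fin.coe_castSucc, Fin.coe_castAdd, Fin.coe_natAdd,
      Fin.val_last, hyy, neg_mul, Finset.sum_neg_distrib, ← pow_mul, one_mul]
    ring
  -- distance computations
  haveI hFinN : Nonempty (Fin n) := ⟨⟨0, by omega⟩⟩
  have hsub : ∀ U, Φ U = y → w - cc U = fun i0 => Alin U (α i0) := by
    intro U hU
    funext i0
    rw [Pi.sub_apply, hcc, hw, ← key U hU (α i0)]
  have hrk : ∀ U, Φ U = y → rkw Fq (w - cc U) = τ := by
    intro U hU
    show Module.finrank Fq ↥(Submodule.span Fq (Set.range (w - cc U))) = τ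
    have hspan : Submodule.span Fq (Set.range (w - cc U)) = Submodule.map (Alin U) W := by
      rw [hsub U hU]
      have h1 : Set.range (fun i0 => Alin U (α i0)) = (Alin U) '' Set.range α := by
        rw [← Set.range_comp]; rfl
      rw [h1, Submodule.span_image, ← hW]
    rw [hspan]
    have h1 := LinearMap.finrank_range_add_finrank_ker ((Alin U).domRestrict W)
    rw [LinearMap.range_domRestrict] at h1
    have h2 : LinearMap.ker ((Alin U).domRestrict W) = Submodule.comap W.subtype (V U) := by
      ext x
      rw [LinearMap.mem_ker, LinearMap.domRestrict_apply, Submodule.mem_comap,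
        ← hAker U, LinearMap.mem_ker]
      rfl
    rw [h2] at h1
    have h3 := LinearEquiv.finrank_eq (Submodule.comapSubtypeEquivOfLe (hVle U))
    rw [h3, hVfin U, hWfin] at h1
    omega
  have hne : ∀ U, Φ U = y → w ≠ cc U := by
    intro U hU hEq
    have h0 : w - cc U = 0 := by rw [hEq, sub_self]
    have h1 := hrk U hU
    rw [h0] at h1
    have h2 : rkw Fq (0 : Fin n → K) = 0 := by
      show Module.finrank Fq ↥(Submodule.span Fq (Set.range (0 : Fin n → K))) = 0
      have h3 : Set.range (0 : Fin n → K) = {0} := by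
        have h4 : (0 : Fin n → K) = fun _ => (0 : K) := rfl
        rw [h4, Set.range_const]
      rw [h3, Submodule.span_zero_singleton]
      exact finrank_bot Fq K
    omega
  have hball : ∀ U, Φ U = y → cc U ∈ ball Fq w τ := by
    intro U hU
    show rkw Fq (w - cc U) ≤ τ
    rw [hrk U hU]
  -- injection into the ball
  let Ψ : {U : STy // Φ U = y} → ↥(C ∩ ball Fq w τ) := fun Up =>
    ⟨cc Up.1, hccC Up.1, hball Up.1 Up.2⟩
  have hΨinj : Function.Injective Ψ := by
    intro U1 U2 hEq
    have hc : cc U1.1 = cc U2.1 := congrArg Subtype.val hEq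
    have hAeq : ∀ i0 : Fin n, Alin U1.1 (α i0) = Alin U2.1 (α i0) := by
      intro i0
      have h1 := congrFun (hsub U1.1 U1.2) i0
      have h2 := congrFun (hsub U2.1 U2.2) i0
      rw [← h1, ← h2, hc]
    have hAW : ∀ x ∈ W, Alin U1.1 x = Alin U2.1 x := by
      intro x hx
      have hle : W ≤ LinearMap.ker (Alin U1.1 - Alin U2.1) := by
        rw [hW, Submodule.span_le]
        rintro _ ⟨i0, rfl⟩
        rw [SetLike.mem_coe, LinearMap.mem_ker, LinearMap.sub_apply, hAeq i0, sub_self]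
      have h5 := hle hx
      rw [LinearMap.mem_ker, LinearMap.sub_apply, sub_eq_zero] at h5
      exact h5
    have hVeq : V U1.1 = V U2.1 := by
      ext x
      constructor
      · intro hx
        have hxW : x ∈ W := hVle U1.1 hx
        rw [← hAker U1.1, LinearMap.mem_ker] at hx
        rw [← hAker U2.1, LinearMap.mem_ker, ← hAW x hxW]
        exact hx
      · intro hx
        have hxW : x ∈ W := hVle U2.1 hx
        rw [← hAker U2.1, LinearMap.mem_ker] at hx
        rw [← hAker U1.1, LinearMap.mem_ker, hAW x hxW]
        exact hx
    have hU12 : U1.1.1 = U2.1.1 := by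
      rw [hV] at hVeq
      exact Submodule.map_injective_of_injective he'inj hVeq
    exact Subtype.ext (Subtype.ext hU12)
  -- nonemptiness of subspace type
  have hSne : Nonempty STy := by
    have hτn : τ ≤ n := by omega
    let gins : Fin τ → Fin n := fun i => ⟨(i : ℕ), by omega⟩
    have hginj : Function.Injective gins := by
      intro a b hab
      have hv : ((gins a : Fin n) : ℕ) = ((gins b : Fin n) : ℕ) := congrArg Fin.val hab
      exact Fin.ext hv
    let π : (Fin n → Fq) →ₗ[Fq] (Fin τ → Fq) := LinearMap.funLeft Fq Fq gins
    have hπs : Function.Surjective π :=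
      LinearMap.funLeft_surjective_of_injective Fq Fq gins hginj
    have hkf : Module.finrank Fq ↥(LinearMap.ker π) = n - τ := by
      have h1 := LinearMap.finrank_range_add_finrank_ker π
      rw [LinearMap.range_eq_top.mpr hπs, finrank_top, Module.finrank_pi,
        Module.finrank_pi, Fintype.card_fin, Fintype.card_fin] at h1
      omega
    exact ⟨⟨LinearMap.ker π, hkf⟩⟩
  -- conclusion
  have hbound : Nat.card STy ≤ Nat.card ↥(C ∩ ball Fq w τ) * q ^ (m * (n - τ - h)) := by
    calc Nat.card STy
        ≤ Nat.card {U : STy // Φ U = y} * Nat.card (Fin (n - τ - h) → K) := hy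
      _ ≤ Nat.card ↥(C ∩ ball Fq w τ) * q ^ (m * (n - τ - h)) := by
          rw [cardB]
          exact Nat.mul_le_mul_right _ (Nat.card_le_card_of_injective Ψ hΨinj)
  refine ⟨w, ?_, hbound⟩
  intro hwC
  have hfne : Nonempty {U : STy // Φ U = y} := by
    by_contra hfe
    rw [not_nonempty_iff] at hfe
    have h0 : Nat.card {U : STy // Φ U = y} = 0 := Nat.card_of_isEmpty
    have h1 : 0 < Nat.card STy := Nat.card_pos
    rw [h0, zero_mul] at hy
    omega
  obtain ⟨U⟩ := hfne
  have hdle : d ≤ τ := by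
    rw [hd]
    have hmem : τ ∈ {r : ℕ | ∃ u ∈ C, ∃ v ∈ C, u ≠ v ∧ rkw Fq (u - v) = r} :=
      ⟨w, hwC, cc U.1, hccC U.1, hne U.1 U.2, hrk U.1 U.2⟩
    exact Nat.sInf_le hmem
  omega
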